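/- Let M be a real m×m matrix with rows and columns indexed by a finite set H, satisfying M·M = M (an idempotent/projection matrix), and let r be the rank of M. Then for every 0 ≤ k ≤ r, Σ_{A ⊆ H, |A| = k} det(M[A]) = C(r,k). -/

import Mathlib

open Matrix

/-- The principal submatrix `M[A]` of `M` determined by the rows and columns
    with index in `A` (with the convention `det M[∅] = 1`). -/
def psub {ι : Type*} (M : Matrix ι ι ℝ) (A : Finset ι) : Matrix ↥A ↥A ℝ :=
  M.submatrix (fun a => a.1) (fun a => a.1)

section Aux

variable {H : Type*} [Fintype H] [DecidableEq H]

lemma det_piecewise_one (M : Matrix H H ℝ) (S : Finset H) :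
    Matrix.det (Matrix.of (S.piecewise M (1 : Matrix H H ℝ))) = (psub M S).det := by
  classical
  let e : {x // x ∈ S} ⊕ {x // x ∉ S} ≃ H := Equiv.sumCompl (· ∈ S)
  rw [← Matrix.det_submatrix_equiv_self e]
  have h : (Matrix.of (S.piecewise M (1 : Matrix H H ℝ))).submatrix e e =
      Matrix.fromBlocks (psub M S)
        (M.submatrix (fun a : {x // x ∈ S} => a.1) (fun a : {x // x ∉ S} => a.1))
        0 1 := by
    ext i j
    cases i with
    | inl a =>
      cases j with
      | inl b => simp [e, Finset.piecewise, psub, a.2]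
      | inr b => simp [e, Finset.piecewise, a.2]
    | inr a =>
      cases j with
      | inl b =>
        have hab : a.1 ≠ b.1 := fun h => a.2 (h ▸ b.2)
        simp [e, Finset.piecewise, a.2, Matrix.one_apply, hab]
      | inr b =>
        simp [e, Finset.piecewise, a.2, Matrix.one_apply, Subtype.ext_iff]
  rw [h, Matrix.det_fromBlocks_zero₂₁, Matrix.det_one, mul_one]

lemma det_one_add_smul_expand (M : Matrix H H ℝ) (t : ℝ) :
    (1 + t • M).det = ∑ S : Finset H, t ^ S.card * (psub M S).det := by
  classical
  have h : (t • M + 1 : Matrix H H ℝ).det = ∑ s : Finset H,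
      Matrix.det (Matrix.of (s.piecewise (t • M : Matrix H H ℝ) (1 : Matrix H H ℝ))) :=
    (Matrix.detRowAlternating (R := ℝ) (n := H)).toMultilinearMap.map_add_univ
      (t • M) (1 : Matrix H H ℝ)
  rw [add_comm, h]
  refine Finset.sum_congr rfl (fun S _ => ?_)
  rw [det_piecewise_one (t • M) S]
  have h2 : psub (t • M) S = t • psub M S := rfl
  rw [h2, Matrix.det_smul, Fintype.card_coe]

lemma det_one_add_smul_proj (M : Matrix H H ℝ) (hM : M * M = M) (t : ℝ) :
    (1 + t • M).det = (t + 1) ^ M.rank := by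
  classical
  set f := M.mulVecLin with hfdef
  have hff : f ∘ₗ f = f := by
    rw [hfdef, ← Matrix.mulVecLin_mul, hM]
  have hproj : LinearMap.IsProj (LinearMap.range f) f := by
    constructor
    · intro x; exact LinearMap.mem_range_self f x
    · rintro x ⟨y, rfl⟩
      exact congrFun (congrArg DFunLike.coe hff) y
  have hc : IsCompl (LinearMap.range f) (LinearMap.ker f) := hproj.isCompl
  let b₁ := Module.finBasis ℝ (LinearMap.range f)
  let b₂ := Module.finBasis ℝ (LinearMap.ker f)
  let b : Module.Basis (Fin (Module.finrank ℝ (LinearMap.range f)) ⊕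
      Fin (Module.finrank ℝ (LinearMap.ker f))) ℝ (H → ℝ) :=
    (b₁.prod b₂).map (Submodule.prodEquivOfIsCompl _ _ hc)
  set g := (LinearMap.id : (H → ℝ) →ₗ[ℝ] (H → ℝ)) + t • f with hgdef
  have hg1 : (1 + t • M).mulVecLin = g := by
    apply LinearMap.ext
    intro v
    simp [hgdef, hfdef, Matrix.add_mulVec, Matrix.smul_mulVec]
  let d : (Fin (Module.finrank ℝ (LinearMap.range f)) ⊕
      Fin (Module.finrank ℝ (LinearMap.ker f))) → ℝ :=
    Sum.elim (fun _ => t + 1) (fun _ => 1)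
  have hb : ∀ i, g (b i) = d i • b i := by
    intro i
    cases i with
    | inl i =>
      have hmem : (b (Sum.inl i)) ∈ LinearMap.range f := by
        simp [b, Module.Basis.prod_apply, Submodule.coe_prodEquivOfIsCompl]
      have hfx : f (b (Sum.inl i)) = b (Sum.inl i) := hproj.map_id _ hmem
      simp [hgdef, hfx, d]
      module
    | inr i =>
      have hmem : (b (Sum.inr i)) ∈ LinearMap.ker f := by
        simp [b, Module.Basis.prod_apply, Submodule.coe_prodEquivOfIsCompl]
      have hfx : f (b (Sum.inr i)) = 0 := hmem
      simp [hgdef, hfx, d]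
  have hmat : LinearMap.toMatrix b b g = Matrix.diagonal d := by
    ext i j
    rw [LinearMap.toMatrix_apply, hb j, _root_.map_smul, Module.Basis.repr_self]
    simp only [Finsupp.smul_apply, Finsupp.single_apply, Matrix.diagonal_apply, smul_eq_mul]
    rcases eq_or_ne i j with rfl | hij
    · simp
    · simp [hij, Ne.symm hij]
  have hdet : (1 + t • M).det = g.det := by
    rw [← LinearMap.det_toLin' (1 + t • M), Matrix.toLin'_apply', hg1]
  rw [hdet, ← LinearMap.det_toMatrix b, hmat, Matrix.det_diagonal]
  rw [Fintype.prod_sum_type]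
  simp [d, Matrix.rank]
  rfl


end Aux

/-- Let `M` be a real idempotent (projection) matrix with rows and columns
indexed by a finite set `H`, and let `r` be its rank. Then for every `0 ≤ k ≤ r`,
`∑_{A ⊆ H, |A| = k} det(M[A]) = C(r,k)`. -/
theorem sum_principal_minors_of_projection
    {H : Type*} [Fintype H] [DecidableEq H]
    (M : Matrix H H ℝ) (hM : M * M = M) (k : ℕ) (hk : k ≤ M.rank) :
    ∑ A ∈ (Finset.univ : Finset H).powersetCard k, (psub M A).det
      = (M.rank.choose k : ℝ) := by
  classical
  set P : Polynomial ℝ :=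
    ∑ S : Finset H, Polynomial.C ((psub M S).det) * Polynomial.X ^ S.card with hP
  have hPQ : P = (Polynomial.X + 1) ^ M.rank := by
    apply Polynomial.funext
    intro t
    have h1 : P.eval t = ∑ S : Finset H, t ^ S.card * (psub M S).det := by
      rw [hP, Polynomial.eval_finset_sum]
      refine Finset.sum_congr rfl fun S _ => ?_
      rw [Polynomial.eval_mul, Polynomial.eval_C, Polynomial.eval_pow, Polynomial.eval_X,
        mul_comm]
    rw [h1, ← det_one_add_smul_expand M t, det_one_add_smul_proj M hM t]
    simp
  have hcoeff := congrArg (fun p => Polynomial.coeff p k) hPQ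
  simp only [hP] at hcoeff
  rw [Polynomial.coeff_X_add_one_pow] at hcoeff
  rw [Polynomial.finset_sum_coeff] at hcoeff
  simp only [Polynomial.coeff_C_mul, Polynomial.coeff_X_pow] at hcoeff
  rw [← hcoeff]
  rw [Finset.powersetCard_eq_filter, Finset.powerset_univ]
  rw [Finset.sum_filter]
  refine Finset.sum_congr rfl (fun S _ => ?_)
  by_cases h : S.card = k
  · simp [h]
  · simp [h, Ne.symm h]
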